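/- Let K = ℚ(i,√5), F = ℚ(i), σ the F-automorphism with σ(√5) = −√5. For k₀, k₁ in the ring of integers O_K, the determinant of the matrix [[k₀, i·σ(k₁)],[k₁, σ(k₀)]], namely k₀σ(k₀) − i·k₁σ(k₁), lies in ℤ[i]. Moreover if (k₀,k₁) ≠ (0,0), this determinant has absolute value at least 1. -/

import Mathlib

open Complex GaussianInt

noncomputable section

/-- The golden ratio `φ = (1+√5)/2` as a complex number. -/
def phi : ℂ := (1 + Real.sqrt 5) / 2

/-- Its conjugate `ψ = σ(φ) = (1−√5)/2`. -/
def psi : ℂ := (1 - Real.sqrt 5) / 2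

section GoldenAux


def toZMod5 (r : { r : ZMod 5 // r * r = ((-1 : ℤ) : ZMod 5) }) : GaussianInt →+* ZMod 5 :=
  Zsqrtd.lift r

lemma toZMod5_apply (r : { r : ZMod 5 // r * r = ((-1 : ℤ) : ZMod 5) }) (x : GaussianInt) :
    toZMod5 r x = (x.re : ZMod 5) + (x.im : ZMod 5) * r := by
  unfold toZMod5; exact Zsqrtd.lift_apply_apply r x

lemma zmod5_key : ∀ s t u v : ZMod 5,
    s^2 + s*t - t^2 = 2 * (u^2 + u*v - v^2) → (s - 2*t = 0 ∧ u - 2*v = 0) := by decide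

lemma dvd5 (x : GaussianInt) (h2 : toZMod5 ⟨2, by decide⟩ x = 0)
    (h3 : toZMod5 ⟨3, by decide⟩ x = 0) : (5 : GaussianInt) ∣ x := by
  rw [toZMod5_apply] at h2 h3
  have hre : ((x.re : ZMod 5)) = 0 := by linear_combination 3*h2 - 2*h3
  have him : ((x.im : ZMod 5)) = 0 := by linear_combination h3 - h2
  rw [show (5 : GaussianInt) = ((5:ℤ) : GaussianInt) by norm_num, Zsqrtd.intCast_dvd]
  constructor
  · simpa using (ZMod.intCast_zmod_eq_zero_iff_dvd x.re 5).1 hre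
  · simpa using (ZMod.intCast_zmod_eq_zero_iff_dvd x.im 5).1 him

lemma zmod5_key3 : ∀ s t u v : ZMod 5,
    s^2 + s*t - t^2 = 3 * (u^2 + u*v - v^2) → (s - 2*t = 0 ∧ u - 2*v = 0) := by decide

lemma five_ne_zero : (5 : GaussianInt) ≠ 0 := by decide

lemma norm_five : Zsqrtd.norm (5 : GaussianInt) = 25 := by decide

lemma descent : ∀ n : ℕ, ∀ a b c d : GaussianInt,
    (Zsqrtd.norm (a^2 + a*b - b^2)).natAbs = n →
    a^2 + a*b - b^2 = (⟨0,1⟩ : GaussianInt) * (c^2 + c*d - d^2) →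
    a^2 + a*b - b^2 = 0 := by
  intro n
  induction n using Nat.strong_induction_on with
  | _ n ih =>
    intro a b c d hn heq
    by_cases h0 : a^2 + a*b - b^2 = 0
    · exact h0
    exfalso
    -- map through the two homs to ZMod 5
    have key : ∀ r : { r : ZMod 5 // r * r = ((-1 : ℤ) : ZMod 5) },
        toZMod5 r (a^2+a*b-b^2) = toZMod5 r ⟨0,1⟩ * toZMod5 r (c^2+c*d-d^2) := by
      intro r; rw [← map_mul]; exact congrArg _ heq
    have h2 := key ⟨2, by decide⟩
    have h3 := key ⟨3, by decide⟩
    set f := toZMod5 ⟨2, by decide⟩ with hf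
    set g := toZMod5 ⟨3, by decide⟩ with hg
    have hfi : f (⟨0,1⟩ : GaussianInt) = 2 := by
      rw [hf, toZMod5_apply]; norm_num
    have hgi : g (⟨0,1⟩ : GaussianInt) = 3 := by
      rw [hg, toZMod5_apply]; norm_num
    rw [map_sub, map_add, map_pow, map_pow, map_mul, hfi] at h2
    rw [map_sub, map_add, map_pow, map_pow, map_mul, hgi] at h3
    rw [map_sub, map_add, map_pow, map_pow, map_mul] at h2 h3
    have k2 := zmod5_key (f a) (f b) (f c) (f d) h2
    have k3 := zmod5_key3 (g a) (g b) (g c) (g d) h3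
    have hab : (5 : GaussianInt) ∣ (a - 2*b) := by
      apply dvd5
      · rw [← hf, map_sub, map_mul, map_ofNat]; simpa using k2.1
      · rw [← hg, map_sub, map_mul, map_ofNat]; simpa using k3.1
    have hcd : (5 : GaussianInt) ∣ (c - 2*d) := by
      apply dvd5
      · rw [← hf, map_sub, map_mul, map_ofNat]; simpa using k2.2
      · rw [← hg, map_sub, map_mul, map_ofNat]; simpa using k3.2
    obtain ⟨z, hz⟩ := hab
    obtain ⟨w, hw⟩ := hcd
    have e1 : a^2 + a*b - b^2 = 5 * ((b+2*z)^2 + (b+2*z)*z - z^2) := by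
      linear_combination (a + 3*b + 5*z) * hz
    have e2 : c^2 + c*d - d^2 = 5 * ((d+2*w)^2 + (d+2*w)*w - w^2) := by
      linear_combination (c + 3*d + 5*w) * hw
    have heq' : (b+2*z)^2 + (b+2*z)*z - z^2
        = (⟨0,1⟩ : GaussianInt) * ((d+2*w)^2 + (d+2*w)*w - w^2) := by
      apply mul_left_cancel₀ five_ne_zero
      linear_combination heq - e1 + (⟨0,1⟩ : GaussianInt) * e2
    have hX0 : (b+2*z)^2 + (b+2*z)*z - z^2 ≠ 0 := by
      intro h; apply h0; rw [e1, h, mul_zero]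
    have hnormX : (Zsqrtd.norm ((b+2*z)^2 + (b+2*z)*z - z^2)).natAbs ≠ 0 := by
      simp only [ne_eq, Int.natAbs_eq_zero]
      rw [Zsqrtd.norm_eq_zero_iff (by norm_num)]
      exact hX0
    have hlt : (Zsqrtd.norm ((b+2*z)^2 + (b+2*z)*z - z^2)).natAbs < n := by
      have : n = 25 * (Zsqrtd.norm ((b+2*z)^2 + (b+2*z)*z - z^2)).natAbs := by
        rw [← hn, e1, Zsqrtd.norm_mul, Int.natAbs_mul, norm_five]
        rfl
      omega
    exact hX0 (ih _ hlt (b+2*z) z (d+2*w) w rfl heq')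

lemma phi_add_psi : phi + psi = 1 := by rw [phi, psi]; ring

lemma phi_mul_psi : phi * psi = -1 := by
  rw [phi, psi]
  have h : ((Real.sqrt 5 : ℝ) : ℂ)^2 = 5 := by
    rw [← Complex.ofReal_pow, Real.sq_sqrt (by norm_num : (0:ℝ) ≤ 5)]; norm_num
  linear_combination -h/4

lemma prod_eq (a b : GaussianInt) :
    (toComplex a + toComplex b * phi) * (toComplex a + toComplex b * psi)
      = toComplex (a^2 + a*b - b^2) := by
  rw [map_sub, map_add, map_pow, map_pow, map_mul]
  linear_combination (toComplex a * toComplex b) * phi_add_psi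
    + (toComplex b)^2 * phi_mul_psi

lemma irr_psi : Irrational ((1 - Real.sqrt 5) / 2) := by
  have h5 : Irrational (Real.sqrt 5) := (by norm_num : Nat.Prime 5).irrational_sqrt
  have h1 : Irrational (1 - Real.sqrt 5) := by
    simpa using h5.intCast_sub 1
  simpa [div_eq_mul_inv] using h1.mul_ratCast (q := 1/2) (by norm_num)

lemma rat_coeff_zero (x y : ℤ) (h : (x:ℝ) + (y:ℝ) * ((1 - Real.sqrt 5)/2) = 0) :
    x = 0 ∧ y = 0 := by
  have hy : y = 0 := by
    by_contra hb
    have hb' : (y:ℝ) ≠ 0 := Int.cast_ne_zero.mpr hb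
    apply irr_psi
    refine ⟨(-x / y : ℚ), ?_⟩
    push_cast
    rw [div_eq_iff hb']
    linarith
  refine ⟨?_, hy⟩
  rw [hy] at h
  push_cast at h
  rw [zero_mul, add_zero] at h
  exact_mod_cast h

lemma aux_zero (a b : GaussianInt) (h : toComplex a + toComplex b * psi = 0) :
    a = 0 ∧ b = 0 := by
  have hps : psi = (((1 - Real.sqrt 5)/2 : ℝ) : ℂ) := by rw [psi]; push_cast; ring
  have hre : (a.re:ℝ) + (b.re:ℝ) * ((1 - Real.sqrt 5)/2) = 0 := by
    have h' := congrArg Complex.re h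
    rw [hps] at h'
    simpa [Complex.add_re, Complex.mul_re, ← GaussianInt.intCast_re, ← GaussianInt.intCast_im] using h'
  have him : (a.im:ℝ) + (b.im:ℝ) * ((1 - Real.sqrt 5)/2) = 0 := by
    have h' := congrArg Complex.im h
    rw [hps] at h'
    simpa [Complex.add_im, Complex.mul_im, ← GaussianInt.intCast_re, ← GaussianInt.intCast_im] using h'
  obtain ⟨h1, h2⟩ := rat_coeff_zero a.re b.re hre
  obtain ⟨h3, h4⟩ := rat_coeff_zero a.im b.im him
  constructor <;> ext <;> simp [h1, h2, h3, h4]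

lemma one_le_abs_toComplex (g : GaussianInt) (hg : g ≠ 0) :
    1 ≤ ‖toComplex g‖ := by
  have h1 : (1:ℝ) ≤ Complex.normSq (toComplex g) := by
    have heq : Complex.normSq (toComplex g) = (g.re : ℝ)^2 + (g.im : ℝ)^2 := by
      rw [Complex.normSq_apply, ← GaussianInt.intCast_re, ← GaussianInt.intCast_im]; ring
    rw [heq]
    have hor : g.re ≠ 0 ∨ g.im ≠ 0 := by
      by_contra hc; push_neg at hc
      exact hg (by ext <;> simp [hc.1, hc.2])
    have h1 : (1:ℤ) ≤ g.re^2 + g.im^2 := by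
      rcases hor with h | h <;>
        nlinarith [Int.one_le_abs h, _root_.sq_abs g.re, _root_.sq_abs g.im,
          sq_nonneg g.re, sq_nonneg g.im, abs_nonneg g.re, abs_nonneg g.im]
    calc (1:ℝ) ≤ ((g.re^2 + g.im^2 : ℤ) : ℝ) := by exact_mod_cast h1
      _ = (g.re:ℝ)^2 + (g.im:ℝ)^2 := by push_cast; ring
  nlinarith [Complex.sq_norm (toComplex g), norm_nonneg (toComplex g)]

lemma toComplex_i : toComplex (⟨0,1⟩ : GaussianInt) = Complex.I := by
  rw [toComplex_def]; simp

lemma nonzero_of_sigma (a b : GaussianInt)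
    (h : toComplex (a^2 + a*b - b^2) = 0) :
    toComplex a + toComplex b * phi = 0 := by
  rw [← prod_eq] at h
  rcases mul_eq_zero.mp h with h' | h'
  · exact h'
  · obtain ⟨ha, hb⟩ := aux_zero a b h'
    simp [ha, hb]

end GoldenAux

/-- Nonvanishing determinant property of the Golden Code: for `k₀, k₁` in the ring of
integers `O_K = ℤ[i][φ]` of `K = ℚ(i,√5)` (written `kⱼ = aⱼ + bⱼφ` with `aⱼ, bⱼ ∈ ℤ[i]`,
so `σ(kⱼ) = aⱼ + bⱼψ`), the determinant `k₀σ(k₀) − i·k₁σ(k₁)` of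
`[[k₀, i·σ(k₁)],[k₁, σ(k₀)]]` lies in `ℤ[i]`, and has absolute value at least `1`
whenever `(k₀, k₁) ≠ (0, 0)`. -/
theorem stmt_10 (a₀ b₀ a₁ b₁ : GaussianInt) :
    (∃ g : GaussianInt, (toComplex g : ℂ) =
        ((toComplex a₀ + toComplex b₀ * phi) * (toComplex a₀ + toComplex b₀ * psi)
          - Complex.I * ((toComplex a₁ + toComplex b₁ * phi) *
              (toComplex a₁ + toComplex b₁ * psi)))) ∧
    (¬ ((toComplex a₀ + toComplex b₀ * phi = 0) ∧ (toComplex a₁ + toComplex b₁ * phi = 0)) →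
      1 ≤ norm
        ((toComplex a₀ + toComplex b₀ * phi) * (toComplex a₀ + toComplex b₀ * psi)
          - Complex.I * ((toComplex a₁ + toComplex b₁ * phi) *
              (toComplex a₁ + toComplex b₁ * psi)))) := by
  obtain ⟨N₀, hN₀⟩ : ∃ N, N = a₀^2 + a₀*b₀ - b₀^2 := ⟨_, rfl⟩
  obtain ⟨N₁, hN₁⟩ : ∃ N, N = a₁^2 + a₁*b₁ - b₁^2 := ⟨_, rfl⟩
  have hdet : toComplex (N₀ - ⟨0,1⟩ * N₁)
      = ((toComplex a₀ + toComplex b₀ * phi) * (toComplex a₀ + toComplex b₀ * psi)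
          - Complex.I * ((toComplex a₁ + toComplex b₁ * phi) *
              (toComplex a₁ + toComplex b₁ * psi))) := by
    rw [hN₀, hN₁, map_sub, map_mul, toComplex_i, prod_eq, prod_eq]
  constructor
  · refine ⟨N₀ - ⟨0,1⟩ * N₁, ?_⟩
    exact hdet
  · intro hne
    rw [← hdet]
    apply one_le_abs_toComplex
    intro hg0
    have hg : N₀ = (⟨0,1⟩ : GaussianInt) * N₁ := sub_eq_zero.mp hg0
    rw [hN₀, hN₁] at hg
    have h0 : a₀^2 + a₀*b₀ - b₀^2 = 0 := descent _ a₀ b₀ a₁ b₁ rfl hg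
    have h1 : a₁^2 + a₁*b₁ - b₁^2 = 0 := by
      have h' : (⟨0,1⟩ : GaussianInt) * (a₁^2 + a₁*b₁ - b₁^2) = 0 := by rw [← hg, h0]
      rcases mul_eq_zero.mp h' with h | h
      · exact absurd h (by decide)
      · exact h
    exact hne ⟨nonzero_of_sigma a₀ b₀ (by rw [h0, map_zero]),
      nonzero_of_sigma a₁ b₁ (by rw [h1, map_zero])⟩

end
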